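/- arXiv:2603.11304 — 5 statements merged into one kernel-verified Lean document; each statement's English description precedes it below -/
import Mathlib

section
/- Let Σ₁, ..., Σ_E and Σ̂₁, ..., Σ̂_E be symmetric positive semidefinite p×p matrices with τ := min_e Tr(Σ_e) > 0 and Tr(Σ̂_e) > 0 for all e. Then for every orthonormal V ∈ ℝ^{p×k} and every e, | Tr(Vᵀ Σ̂_e V)/Tr(Σ̂_e) − Tr(Vᵀ Σ_e V)/Tr(Σ_e) | ≤ ((√k + √p)/τ) · ‖Σ̂_e − Σ_e‖_F. -/
open Matrix

section Helpers

variable {p k : ℕ}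

-- trace of Aᵀ*B as entrywise sum
lemma trace_transpose_mul_eq (A B : Matrix (Fin p) (Fin p) ℝ) :
    (Aᵀ * B).trace = ∑ j, ∑ i, A i j * B i j := by
  simp [Matrix.trace, Matrix.diag, Matrix.mul_apply, Matrix.transpose_apply]

-- Cauchy-Schwarz for Frobenius inner product
lemma cs_trace (A B : Matrix (Fin p) (Fin p) ℝ) :
    |(Aᵀ * B).trace| ≤ Real.sqrt ((Aᵀ * A).trace) * Real.sqrt ((Bᵀ * B).trace) := by
  have hA : (Aᵀ * A).trace = ∑ ij : Fin p × Fin p, (A ij.1 ij.2)^2 := by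
    rw [trace_transpose_mul_eq, ← Finset.sum_product']
    simp only [sq]
    exact Fintype.sum_equiv (Equiv.prodComm _ _) _ _ (fun x => rfl)
  have hB : (Bᵀ * B).trace = ∑ ij : Fin p × Fin p, (B ij.1 ij.2)^2 := by
    rw [trace_transpose_mul_eq, ← Finset.sum_product']
    simp only [sq]
    exact Fintype.sum_equiv (Equiv.prodComm _ _) _ _ (fun x => rfl)
  have hAB : (Aᵀ * B).trace = ∑ ij : Fin p × Fin p, A ij.1 ij.2 * B ij.1 ij.2 := by
    rw [trace_transpose_mul_eq, ← Finset.sum_product']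
    exact Fintype.sum_equiv (Equiv.prodComm _ _) _ _ (fun x => rfl)
  have hcs := Finset.sum_mul_sq_le_sq_mul_sq Finset.univ (fun ij : Fin p × Fin p => A ij.1 ij.2)
      (fun ij : Fin p × Fin p => B ij.1 ij.2)
  have h1 : |(Aᵀ * B).trace| = Real.sqrt (((Aᵀ * B).trace)^2) := by
    rw [Real.sqrt_sq_eq_abs]
  rw [h1, ← Real.sqrt_mul (by rw [hA]; positivity)]
  apply Real.sqrt_le_sqrt
  rw [hA, hB, hAB]
  exact hcs

-- PSD trace nonneg
lemma psd_trace_nonneg {M : Matrix (Fin p) (Fin p) ℝ} (hM : M.PosSemidef) : 0 ≤ M.trace := by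
  apply Finset.sum_nonneg
  intro i _
  exact hM.diag_nonneg

end Helpers


open Matrix

section Helpers2

variable {p k : ℕ}

lemma conj_psd {S : Matrix (Fin p) (Fin p) ℝ} (hS : S.PosSemidef)
    (V : Matrix (Fin p) (Fin k) ℝ) : (Vᵀ * S * V).PosSemidef := by
  have := hS.conjTranspose_mul_mul_same V
  rwa [conjTranspose_eq_transpose_of_trivial] at this

lemma psd_trace_nonneg' {M : Matrix (Fin p) (Fin p) ℝ} (hM : M.PosSemidef) : 0 ≤ M.trace := by
  apply Finset.sum_nonneg
  intro i _
  exact hM.diag_nonneg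

-- projection facts
lemma proj_facts (V : Matrix (Fin p) (Fin k) ℝ) (hV : Vᵀ * V = 1) :
    (V * Vᵀ)ᵀ = V * Vᵀ ∧ (V * Vᵀ) * (V * Vᵀ) = V * Vᵀ ∧
      ((V * Vᵀ)ᵀ * (V * Vᵀ)).trace = (k : ℝ) := by
  have h1 : (V * Vᵀ)ᵀ = V * Vᵀ := by rw [transpose_mul, transpose_transpose]
  have h2 : (V * Vᵀ) * (V * Vᵀ) = V * Vᵀ := by
    rw [Matrix.mul_assoc, ← Matrix.mul_assoc Vᵀ, hV, Matrix.one_mul]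
  refine ⟨h1, h2, ?_⟩
  rw [h1, h2, trace_mul_comm, hV, trace_one]
  simp

lemma trace_conj_eq (V : Matrix (Fin p) (Fin k) ℝ) (S : Matrix (Fin p) (Fin p) ℝ) :
    (Vᵀ * S * V).trace = ((V * Vᵀ)ᵀ * S).trace := by
  rw [transpose_mul, transpose_transpose, trace_mul_comm, ← Matrix.mul_assoc]

lemma trace_conj_le {S : Matrix (Fin p) (Fin p) ℝ} (hS : S.PosSemidef)
    (V : Matrix (Fin p) (Fin k) ℝ) (hV : Vᵀ * V = 1) :
    (Vᵀ * S * V).trace ≤ S.trace := by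
  obtain ⟨h1, h2, _⟩ := proj_facts V hV
  set P := V * Vᵀ with hP
  obtain ⟨B, hB⟩ : ∃ B : Matrix (Fin p) (Fin p) ℝ, S = Bᴴ * B := by
    open scoped MatrixOrder in
    exact ⟨CFC.sqrt S, by
      rw [(CFC.sqrt_nonneg S).posSemidef.1.eq, CFC.sqrt_mul_sqrt_self S hS.nonneg]⟩
  have hQt : (1 - P)ᴴ = 1 - P := by
    rw [conjTranspose_sub, conjTranspose_one, conjTranspose_eq_transpose_of_trivial, h1]
  have hQ2 : (1 - P) * (1 - P) = 1 - P := by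
    rw [sub_mul, one_mul, mul_sub, mul_one, h2]; abel
  have key : S.trace - (Vᵀ * S * V).trace = ((1 - P) * S).trace := by
    rw [trace_conj_eq, h1, sub_mul, one_mul, trace_sub]
  have hfact : B * ((1 - P) * Bᴴ) = (B * (1 - P)) * (B * (1 - P))ᴴ := by
    calc B * ((1 - P) * Bᴴ) = B * (((1 - P) * (1 - P)) * Bᴴ) := by rw [hQ2]
      _ = (B * (1 - P)) * ((1 - P) * Bᴴ) := by
          rw [Matrix.mul_assoc, Matrix.mul_assoc]
      _ = (B * (1 - P)) * (B * (1 - P))ᴴ := by rw [conjTranspose_mul, hQt]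
  have hpos : 0 ≤ ((1 - P) * S).trace := by
    rw [hB, ← Matrix.mul_assoc, trace_mul_comm, hfact]
    exact psd_trace_nonneg' (posSemidef_self_mul_conjTranspose _)
  linarith

lemma key_arith (a b c d m sk sp τ : ℝ) (hb : 0 < b) (hdτ : τ ≤ d) (hτ : 0 < τ)
    (ha : 0 ≤ a) (hab : a ≤ b) (hm : 0 ≤ m)
    (h1 : |a - c| ≤ sk * m) (h2 : |b - d| ≤ sp * m) :
    |a/b - c/d| ≤ (sk + sp)/τ * m := by
  have hd : 0 < d := lt_of_lt_of_le hτ hdτ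
  have heq : a/b - c/d = (a-c)/d + (a/b) * ((d-b)/d) := by field_simp; ring
  have hfr : a/b ≤ 1 := (div_le_one hb).2 hab
  have hfr0 : 0 ≤ a/b := div_nonneg ha hb.le
  have h2' : |d - b| ≤ sp * m := by rwa [abs_sub_comm]
  have hskm : 0 ≤ sk * m := le_trans (abs_nonneg _) h1
  have hspm : 0 ≤ sp * m := le_trans (abs_nonneg _) h2
  calc |a/b - c/d| ≤ |(a-c)/d| + |(a/b) * ((d-b)/d)| := by rw [heq]; exact abs_add_le _ _
    _ = |a-c|/d + (a/b) * (|d-b|/d) := by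
        rw [abs_mul, abs_div (a-c), abs_div (d-b), abs_of_pos hd, abs_of_nonneg hfr0]
    _ ≤ sk*m/d + 1 * (sp*m/d) := by
        apply add_le_add
        · gcongr
        · exact mul_le_mul hfr (by gcongr) (by positivity) one_pos.le
    _ = (sk+sp)*m/d := by ring
    _ ≤ (sk+sp)*m/τ := by
        have hnum : 0 ≤ (sk+sp)*m := by nlinarith
        gcongr
    _ = (sk+sp)/τ * m := by ring

end Helpers2


open Matrix



/-- Stability of the normalized explained variance: with `τ = min_e Tr(Σ_e) > 0`,
`|Tr(VᵀΣ̂_eV)/Tr(Σ̂_e) − Tr(VᵀΣ_eV)/Tr(Σ_e)| ≤ ((√k+√p)/τ)·‖Σ̂_e − Σ_e‖_F`. -/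
theorem stmt9 {p k E : ℕ} (hE : 0 < E)
    (Sig SigHat : Fin E → Matrix (Fin p) (Fin p) ℝ)
    (hSig : ∀ e, (Sig e).PosSemidef) (hSigHat : ∀ e, (SigHat e).PosSemidef)
    (hTrHat : ∀ e, 0 < (SigHat e).trace)
    (τ : ℝ)
    (hτ : τ = Finset.univ.inf' (Finset.univ_nonempty_iff.mpr (Fin.pos_iff_nonempty.mp hE))
      (fun e => (Sig e).trace))
    (hτpos : 0 < τ) :
    ∀ (V : Matrix (Fin p) (Fin k) ℝ), Vᵀ * V = 1 → ∀ e,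
      |(Vᵀ * SigHat e * V).trace / (SigHat e).trace
          - (Vᵀ * Sig e * V).trace / (Sig e).trace|
        ≤ ((Real.sqrt k + Real.sqrt p) / τ)
            * Real.sqrt (((SigHat e - Sig e)ᵀ * (SigHat e - Sig e)).trace) := by
  intro V hV e
  obtain ⟨hP1, hP2, hP3⟩ := proj_facts V hV
  set M := SigHat e - Sig e with hM
  set m := Real.sqrt ((Mᵀ * M).trace) with hm
  have hmsq : 0 ≤ (Mᵀ * M).trace := by
    have := psd_trace_nonneg' (posSemidef_conjTranspose_mul_self M)
    rwa [conjTranspose_eq_transpose_of_trivial] at this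
  have H1 : |(Vᵀ * SigHat e * V).trace - (Vᵀ * Sig e * V).trace| ≤ Real.sqrt k * m := by
    have hdiff : (Vᵀ * SigHat e * V).trace - (Vᵀ * Sig e * V).trace
        = (((V * Vᵀ))ᵀ * M).trace := by
      rw [trace_conj_eq V (SigHat e), trace_conj_eq V (Sig e), hM, Matrix.mul_sub, trace_sub]
    rw [hdiff]
    calc |(((V * Vᵀ))ᵀ * M).trace|
        ≤ Real.sqrt (((V * Vᵀ)ᵀ * (V * Vᵀ)).trace) * Real.sqrt ((Mᵀ * M).trace) :=
          cs_trace (V * Vᵀ) M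
      _ = Real.sqrt k * m := by rw [hP3, hm]
  have H2 : |(SigHat e).trace - (Sig e).trace| ≤ Real.sqrt p * m := by
    have hdiff : (SigHat e).trace - (Sig e).trace = ((1 : Matrix (Fin p) (Fin p) ℝ)ᵀ * M).trace := by
      rw [transpose_one, Matrix.one_mul, hM, trace_sub]
    rw [hdiff]
    calc |((1 : Matrix (Fin p) (Fin p) ℝ)ᵀ * M).trace|
        ≤ Real.sqrt (((1 : Matrix (Fin p) (Fin p) ℝ)ᵀ * 1).trace) * Real.sqrt ((Mᵀ * M).trace) :=
          cs_trace 1 M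
      _ = Real.sqrt p * m := by
          rw [transpose_one, Matrix.one_mul, trace_one, hm]
          simp
  have hdτ : τ ≤ (Sig e).trace := by
    rw [hτ]
    exact Finset.inf'_le _ (Finset.mem_univ e)
  exact key_arith _ _ _ _ m (Real.sqrt k) (Real.sqrt p) τ (hTrHat e) hdτ hτpos
    (psd_trace_nonneg' (conj_psd (hSigHat e) V)) (trace_conj_le (hSigHat e) V hV)
    (Real.sqrt_nonneg _) H1 H2
end

section
/- Consider covariance matrices Σ₁ = diag(0.1, 0.9) and Σ₂ = diag(9, 1) on ℝ². The unit vector (1/√2)(1,1)ᵀ maximizes min(vᵀΣ₁v/Tr(Σ₁), vᵀΣ₂v/Tr(Σ₂)) over unit vectors v, with value 1/2, while the unit vector (0,1)ᵀ maximizes min(vᵀΣ₁v, vᵀΣ₂v) over unit vectors, with value 0.9. In particular, the maximizers of the normalized and unnormalized worst-case explained-variance objectives are distinct, as (0,1)ᵀ achieves normalized worst-case value only 0.1 and (1/√2)(1,1)ᵀ achieves unnormalized worst-case value only 0.5. -/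
open Matrix

lemma q1 (v : Fin 2 → ℝ) :
    v ⬝ᵥ (Matrix.diagonal ![(0.1 : ℝ), 0.9]).mulVec v = 0.1*(v 0)^2 + 0.9*(v 1)^2 := by
  simp [Matrix.mulVec, dotProduct, Fin.sum_univ_two, Matrix.diagonal]; ring

lemma q2 (v : Fin 2 → ℝ) :
    v ⬝ᵥ (Matrix.diagonal ![(9 : ℝ), 1]).mulVec v = 9*(v 0)^2 + (v 1)^2 := by
  simp [Matrix.mulVec, dotProduct, Fin.sum_univ_two, Matrix.diagonal]; ring

lemma nrm (v : Fin 2 → ℝ) : v ⬝ᵥ v = (v 0)^2 + (v 1)^2 := by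
  simp [dotProduct, Fin.sum_univ_two]; ring

lemma t1 : (Matrix.diagonal ![(0.1 : ℝ), 0.9]).trace = 1 := by
  simp [Matrix.trace, Fin.sum_univ_two, Matrix.diag, Matrix.diagonal]; norm_num

lemma t2 : (Matrix.diagonal ![(9 : ℝ), 1]).trace = 10 := by
  simp [Matrix.trace, Fin.sum_univ_two, Matrix.diag, Matrix.diagonal]; norm_num

lemma sq2 : (1 / Real.sqrt 2) ^ 2 = 1/2 := by
  rw [div_pow, one_pow, Real.sq_sqrt (by norm_num : (0:ℝ) ≤ 2)]

/-- For `Σ₁ = diag(0.1, 0.9)`, `Σ₂ = diag(9, 1)`, the normalized worst-case objective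
is maximized (value `1/2`) by `(1/√2)(1,1)` while the unnormalized one is maximized
(value `0.9`) by `(0,1)`; the two maximizer sets are distinct since `(0,1)` achieves
normalized value only `0.1` and `(1/√2)(1,1)` unnormalized value only `0.5`. -/
theorem stmt13 :
    IsGreatest
      ((fun v : Fin 2 → ℝ =>
          min (v ⬝ᵥ (Matrix.diagonal ![(0.1 : ℝ), 0.9]).mulVec v
                / (Matrix.diagonal ![(0.1 : ℝ), 0.9]).trace)
              (v ⬝ᵥ (Matrix.diagonal ![(9 : ℝ), 1]).mulVec v
                / (Matrix.diagonal ![(9 : ℝ), 1]).trace))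
        '' {v | v ⬝ᵥ v = 1})
      (1 / 2)
    ∧ (![1 / Real.sqrt 2, 1 / Real.sqrt 2] : Fin 2 → ℝ) ⬝ᵥ
        (![1 / Real.sqrt 2, 1 / Real.sqrt 2] : Fin 2 → ℝ) = 1
    ∧ min ((![1 / Real.sqrt 2, 1 / Real.sqrt 2] : Fin 2 → ℝ) ⬝ᵥ
            (Matrix.diagonal ![(0.1 : ℝ), 0.9]).mulVec ![1 / Real.sqrt 2, 1 / Real.sqrt 2]
            / (Matrix.diagonal ![(0.1 : ℝ), 0.9]).trace)
          ((![1 / Real.sqrt 2, 1 / Real.sqrt 2] : Fin 2 → ℝ) ⬝ᵥ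
            (Matrix.diagonal ![(9 : ℝ), 1]).mulVec ![1 / Real.sqrt 2, 1 / Real.sqrt 2]
            / (Matrix.diagonal ![(9 : ℝ), 1]).trace) = 1 / 2
    ∧ IsGreatest
        ((fun v : Fin 2 → ℝ =>
            min (v ⬝ᵥ (Matrix.diagonal ![(0.1 : ℝ), 0.9]).mulVec v)
                (v ⬝ᵥ (Matrix.diagonal ![(9 : ℝ), 1]).mulVec v))
          '' {v | v ⬝ᵥ v = 1})
        (9 / 10)
    ∧ (![0, 1] : Fin 2 → ℝ) ⬝ᵥ (![0, 1] : Fin 2 → ℝ) = 1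
    ∧ min ((![0, 1] : Fin 2 → ℝ) ⬝ᵥ
            (Matrix.diagonal ![(0.1 : ℝ), 0.9]).mulVec ![0, 1])
          ((![0, 1] : Fin 2 → ℝ) ⬝ᵥ
            (Matrix.diagonal ![(9 : ℝ), 1]).mulVec ![0, 1]) = 9 / 10
    ∧ min ((![0, 1] : Fin 2 → ℝ) ⬝ᵥ
            (Matrix.diagonal ![(0.1 : ℝ), 0.9]).mulVec ![0, 1]
            / (Matrix.diagonal ![(0.1 : ℝ), 0.9]).trace)
          ((![0, 1] : Fin 2 → ℝ) ⬝ᵥ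
            (Matrix.diagonal ![(9 : ℝ), 1]).mulVec ![0, 1]
            / (Matrix.diagonal ![(9 : ℝ), 1]).trace) = 1 / 10
    ∧ min ((![1 / Real.sqrt 2, 1 / Real.sqrt 2] : Fin 2 → ℝ) ⬝ᵥ
            (Matrix.diagonal ![(0.1 : ℝ), 0.9]).mulVec ![1 / Real.sqrt 2, 1 / Real.sqrt 2])
          ((![1 / Real.sqrt 2, 1 / Real.sqrt 2] : Fin 2 → ℝ) ⬝ᵥ
            (Matrix.diagonal ![(9 : ℝ), 1]).mulVec ![1 / Real.sqrt 2, 1 / Real.sqrt 2])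
        = 1 / 2 := by
  have w : Fin 2 → ℝ := ![1 / Real.sqrt 2, 1 / Real.sqrt 2]
  have hw0 : (![1 / Real.sqrt 2, 1 / Real.sqrt 2] : Fin 2 → ℝ) 0 = 1 / Real.sqrt 2 := rfl
  have hw1 : (![1 / Real.sqrt 2, 1 / Real.sqrt 2] : Fin 2 → ℝ) 1 = 1 / Real.sqrt 2 := rfl
  have he0 : (![(0:ℝ), 1] : Fin 2 → ℝ) 0 = 0 := rfl
  have he1 : (![(0:ℝ), 1] : Fin 2 → ℝ) 1 = 1 := rfl
  have hwn : (![1 / Real.sqrt 2, 1 / Real.sqrt 2] : Fin 2 → ℝ) ⬝ᵥ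
      (![1 / Real.sqrt 2, 1 / Real.sqrt 2] : Fin 2 → ℝ) = 1 := by
    rw [nrm, hw0, hw1, sq2]; norm_num
  have hwmin : min ((![1 / Real.sqrt 2, 1 / Real.sqrt 2] : Fin 2 → ℝ) ⬝ᵥ
            (Matrix.diagonal ![(0.1 : ℝ), 0.9]).mulVec ![1 / Real.sqrt 2, 1 / Real.sqrt 2]
            / (Matrix.diagonal ![(0.1 : ℝ), 0.9]).trace)
          ((![1 / Real.sqrt 2, 1 / Real.sqrt 2] : Fin 2 → ℝ) ⬝ᵥ
            (Matrix.diagonal ![(9 : ℝ), 1]).mulVec ![1 / Real.sqrt 2, 1 / Real.sqrt 2]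
            / (Matrix.diagonal ![(9 : ℝ), 1]).trace) = 1 / 2 := by
    rw [q1, q2, t1, t2, hw0, hw1, sq2]; norm_num
  have hwmin' : min ((![1 / Real.sqrt 2, 1 / Real.sqrt 2] : Fin 2 → ℝ) ⬝ᵥ
            (Matrix.diagonal ![(0.1 : ℝ), 0.9]).mulVec ![1 / Real.sqrt 2, 1 / Real.sqrt 2])
          ((![1 / Real.sqrt 2, 1 / Real.sqrt 2] : Fin 2 → ℝ) ⬝ᵥ
            (Matrix.diagonal ![(9 : ℝ), 1]).mulVec ![1 / Real.sqrt 2, 1 / Real.sqrt 2])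
        = 1 / 2 := by
    rw [q1, q2, hw0, hw1, sq2]; norm_num
  have hen : (![0, 1] : Fin 2 → ℝ) ⬝ᵥ (![0, 1] : Fin 2 → ℝ) = 1 := by
    rw [nrm, he0, he1]; norm_num
  have hemin : min ((![0, 1] : Fin 2 → ℝ) ⬝ᵥ
            (Matrix.diagonal ![(0.1 : ℝ), 0.9]).mulVec ![0, 1])
          ((![0, 1] : Fin 2 → ℝ) ⬝ᵥ
            (Matrix.diagonal ![(9 : ℝ), 1]).mulVec ![0, 1]) = 9 / 10 := by
    rw [q1, q2, he0, he1]; norm_num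
  have hemin' : min ((![0, 1] : Fin 2 → ℝ) ⬝ᵥ
            (Matrix.diagonal ![(0.1 : ℝ), 0.9]).mulVec ![0, 1]
            / (Matrix.diagonal ![(0.1 : ℝ), 0.9]).trace)
          ((![0, 1] : Fin 2 → ℝ) ⬝ᵥ
            (Matrix.diagonal ![(9 : ℝ), 1]).mulVec ![0, 1]
            / (Matrix.diagonal ![(9 : ℝ), 1]).trace) = 1 / 10 := by
    rw [q1, q2, t1, t2, he0, he1]; norm_num
  refine ⟨⟨⟨![1 / Real.sqrt 2, 1 / Real.sqrt 2], hwn, hwmin⟩, ?_⟩, hwn, hwmin,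
    ⟨⟨![0, 1], hen, hemin⟩, ?_⟩, hen, hemin, hemin', hwmin'⟩
  · rintro x ⟨v, hv, rfl⟩
    simp only [Set.mem_setOf_eq, nrm] at hv
    simp only [q1, q2, t1, t2]
    apply min_le_iff.mpr
    by_cases h : (v 0)^2 ≤ 1/2
    · right; nlinarith
    · left; nlinarith [sq_nonneg (v 0), sq_nonneg (v 1)]
  · rintro x ⟨v, hv, rfl⟩
    simp only [Set.mem_setOf_eq, nrm] at hv
    simp only [q1, q2]
    have : 0.1*(v 0)^2 + 0.9*(v 1)^2 ≤ 9/10 := by nlinarith [sq_nonneg (v 0)]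
    exact le_trans (min_le_left _ _) this
end

section
/- Let Σ₁ = (1/4)diag(2,2,0,1,1), Σ₂ = (1/4)diag(2,0,2,1,1), Σ₃ = (1/4)diag(0,2,2,1,1) be covariance matrices on ℝ⁵. Any unit vector v = (a,b,c,d,f) maximizing min_e vᵀ Σ_e v satisfies a² = b² = c² = 1/3 and d = f = 0, and the maximal value is 1/3. -/
open Matrix

lemma quad_eval (d : Fin 5 → ℝ) (v : Fin 5 → ℝ) :
    v ⬝ᵥ (((1 : ℝ) / 4) • Matrix.diagonal d).mulVec v =
    (d 0 * v 0^2 + d 1 * v 1^2 + d 2 * v 2^2 + d 3 * v 3^2 + d 4 * v 4^2)/4 := by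
  simp [dotProduct, mulVec_diagonal, Fin.sum_univ_five, Matrix.smul_mulVec]
  ring

lemma dot_eval (v : Fin 5 → ℝ) :
    v ⬝ᵥ v = v 0^2 + v 1^2 + v 2^2 + v 3^2 + v 4^2 := by
  simp [dotProduct, Fin.sum_univ_five]; ring

/-- First step of the sequential-minPCA counterexample: over the three covariances
`(1/4)diag(2,2,0,1,1)`, `(1/4)diag(2,0,2,1,1)`, `(1/4)diag(0,2,2,1,1)`, the maximal
worst-case explained variance of a unit vector is `1/3`, and any unit maximizer
`v = (a,b,c,d,f)` satisfies `a² = b² = c² = 1/3` and `d = f = 0`. -/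
theorem stmt14 :
    IsGreatest
      ((fun v : Fin 5 → ℝ =>
          min (min (v ⬝ᵥ (((1 : ℝ) / 4) • Matrix.diagonal ![(2 : ℝ), 2, 0, 1, 1]).mulVec v)
                   (v ⬝ᵥ (((1 : ℝ) / 4) • Matrix.diagonal ![(2 : ℝ), 0, 2, 1, 1]).mulVec v))
              (v ⬝ᵥ (((1 : ℝ) / 4) • Matrix.diagonal ![(0 : ℝ), 2, 2, 1, 1]).mulVec v))
        '' {v | v ⬝ᵥ v = 1})
      (1 / 3)
    ∧ ∀ v : Fin 5 → ℝ, v ⬝ᵥ v = 1 →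
        min (min (v ⬝ᵥ (((1 : ℝ) / 4) • Matrix.diagonal ![(2 : ℝ), 2, 0, 1, 1]).mulVec v)
                 (v ⬝ᵥ (((1 : ℝ) / 4) • Matrix.diagonal ![(2 : ℝ), 0, 2, 1, 1]).mulVec v))
            (v ⬝ᵥ (((1 : ℝ) / 4) • Matrix.diagonal ![(0 : ℝ), 2, 2, 1, 1]).mulVec v) = 1 / 3 →
        (v 0 ^ 2 = 1 / 3 ∧ v 1 ^ 2 = 1 / 3 ∧ v 2 ^ 2 = 1 / 3 ∧ v 3 = 0 ∧ v 4 = 0) := by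
  have hQ1 : ∀ v : Fin 5 → ℝ,
      v ⬝ᵥ (((1 : ℝ) / 4) • Matrix.diagonal ![(2 : ℝ), 2, 0, 1, 1]).mulVec v =
      (2 * v 0^2 + 2 * v 1^2 + v 3^2 + v 4^2)/4 := by
    intro v; rw [quad_eval]; norm_num [Matrix.cons_val_two, Matrix.cons_val_three, Matrix.cons_val_four]
  have hQ2 : ∀ v : Fin 5 → ℝ,
      v ⬝ᵥ (((1 : ℝ) / 4) • Matrix.diagonal ![(2 : ℝ), 0, 2, 1, 1]).mulVec v =
      (2 * v 0^2 + 2 * v 2^2 + v 3^2 + v 4^2)/4 := by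
    intro v; rw [quad_eval]; norm_num [Matrix.cons_val_two, Matrix.cons_val_three, Matrix.cons_val_four]
  have hQ3 : ∀ v : Fin 5 → ℝ,
      v ⬝ᵥ (((1 : ℝ) / 4) • Matrix.diagonal ![(0 : ℝ), 2, 2, 1, 1]).mulVec v =
      (2 * v 1^2 + 2 * v 2^2 + v 3^2 + v 4^2)/4 := by
    intro v; rw [quad_eval]; norm_num [Matrix.cons_val_two, Matrix.cons_val_three, Matrix.cons_val_four]
  constructor
  · constructor
    · refine ⟨![Real.sqrt 3⁻¹, Real.sqrt 3⁻¹, Real.sqrt 3⁻¹, 0, 0], ?_, ?_⟩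
      · show _ ⬝ᵥ _ = 1
        rw [dot_eval]
        have : (Real.sqrt 3⁻¹)^2 = 3⁻¹ := Real.sq_sqrt (by norm_num)
        simp [this]; norm_num
      · have : (Real.sqrt 3⁻¹)^2 = 3⁻¹ := Real.sq_sqrt (by norm_num)
        simp only [hQ1, hQ2, hQ3]
        simp [this]; norm_num
    · rintro x ⟨v, hv, rfl⟩
      simp only [Set.mem_setOf_eq] at hv
      rw [dot_eval] at hv
      simp only [hQ1, hQ2, hQ3]
      have h1 := min_le_left (min ((2 * v 0^2 + 2 * v 1^2 + v 3^2 + v 4^2)/4) ((2 * v 0^2 + 2 * v 2^2 + v 3^2 + v 4^2)/4)) ((2 * v 1^2 + 2 * v 2^2 + v 3^2 + v 4^2)/4)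
      have h2 := min_le_right (min ((2 * v 0^2 + 2 * v 1^2 + v 3^2 + v 4^2)/4) ((2 * v 0^2 + 2 * v 2^2 + v 3^2 + v 4^2)/4)) ((2 * v 1^2 + 2 * v 2^2 + v 3^2 + v 4^2)/4)
      have h3 := min_le_left ((2 * v 0^2 + 2 * v 1^2 + v 3^2 + v 4^2)/4) ((2 * v 0^2 + 2 * v 2^2 + v 3^2 + v 4^2)/4)
      have h4 := min_le_right ((2 * v 0^2 + 2 * v 1^2 + v 3^2 + v 4^2)/4) ((2 * v 0^2 + 2 * v 2^2 + v 3^2 + v 4^2)/4)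
      have := sq_nonneg (v 3); have := sq_nonneg (v 4)
      linarith [le_trans h1 h3, le_trans h1 h4, h2]
  · intro v hv hmin
    rw [dot_eval] at hv
    rw [hQ1, hQ2, hQ3] at hmin
    have hA : (1:ℝ)/3 ≤ (2 * v 0^2 + 2 * v 1^2 + v 3^2 + v 4^2)/4 := by
      rw [← hmin]; exact le_trans (min_le_left _ _) (min_le_left _ _)
    have hB : (1:ℝ)/3 ≤ (2 * v 0^2 + 2 * v 2^2 + v 3^2 + v 4^2)/4 := by
      rw [← hmin]; exact le_trans (min_le_left _ _) (min_le_right _ _)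
    have hC : (1:ℝ)/3 ≤ (2 * v 1^2 + 2 * v 2^2 + v 3^2 + v 4^2)/4 := by
      rw [← hmin]; exact min_le_right _ _
    have h3 : v 3 = 0 := by nlinarith [sq_nonneg (v 3), sq_nonneg (v 4)]
    have h4 : v 4 = 0 := by nlinarith [sq_nonneg (v 3), sq_nonneg (v 4)]
    rw [h3, h4] at hA hB hC hv
    refine ⟨by linarith, by linarith, by linarith, h3, h4⟩
end

section
/- Let Σ₁ = (1/4)diag(2,2,0,1,1), Σ₂ = (1/4)diag(2,0,2,1,1), Σ₃ = (1/4)diag(0,2,2,1,1). The orthonormal pair v₁ = (1/√2)(1,1,0,0,0)ᵀ, v₂ = (1/√2)(0,0,1,1,0)ᵀ satisfies min_e [v₁ᵀΣ_e v₁ + v₂ᵀΣ_e v₂] = 5/8, whereas any orthonormal pair whose first vector is (1/√3)(1,1,1,0,0)ᵀ achieves worst-case explained variance at most 7/12 < 5/8. Hence the sequential (greedy) construction of minPCA components is not optimal for the joint rank-2 minPCA problem. -/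
open Matrix

/-- Sequential (greedy) minPCA is suboptimal for the joint rank-2 problem: the
orthonormal pair `v₁ = (1/√2)(1,1,0,0,0)`, `v₂ = (1/√2)(0,0,1,1,0)` attains
worst-case explained variance `5/8`, while any orthonormal pair starting from the
greedy first direction `(1/√3)(1,1,1,0,0)` attains at most `7/12 < 5/8`. -/
theorem stmt15 :
    (![1 / Real.sqrt 2, 1 / Real.sqrt 2, 0, 0, 0] : Fin 5 → ℝ) ⬝ᵥ
        (![1 / Real.sqrt 2, 1 / Real.sqrt 2, 0, 0, 0] : Fin 5 → ℝ) = 1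
    ∧ (![0, 0, 1 / Real.sqrt 2, 1 / Real.sqrt 2, 0] : Fin 5 → ℝ) ⬝ᵥ
        (![0, 0, 1 / Real.sqrt 2, 1 / Real.sqrt 2, 0] : Fin 5 → ℝ) = 1
    ∧ (![1 / Real.sqrt 2, 1 / Real.sqrt 2, 0, 0, 0] : Fin 5 → ℝ) ⬝ᵥ
        (![0, 0, 1 / Real.sqrt 2, 1 / Real.sqrt 2, 0] : Fin 5 → ℝ) = 0
    ∧ min (min
          ((![1 / Real.sqrt 2, 1 / Real.sqrt 2, 0, 0, 0] : Fin 5 → ℝ) ⬝ᵥ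
              (((1 : ℝ) / 4) • Matrix.diagonal ![(2 : ℝ), 2, 0, 1, 1]).mulVec
                ![1 / Real.sqrt 2, 1 / Real.sqrt 2, 0, 0, 0]
            + (![0, 0, 1 / Real.sqrt 2, 1 / Real.sqrt 2, 0] : Fin 5 → ℝ) ⬝ᵥ
              (((1 : ℝ) / 4) • Matrix.diagonal ![(2 : ℝ), 2, 0, 1, 1]).mulVec
                ![0, 0, 1 / Real.sqrt 2, 1 / Real.sqrt 2, 0])
          ((![1 / Real.sqrt 2, 1 / Real.sqrt 2, 0, 0, 0] : Fin 5 → ℝ) ⬝ᵥ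
              (((1 : ℝ) / 4) • Matrix.diagonal ![(2 : ℝ), 0, 2, 1, 1]).mulVec
                ![1 / Real.sqrt 2, 1 / Real.sqrt 2, 0, 0, 0]
            + (![0, 0, 1 / Real.sqrt 2, 1 / Real.sqrt 2, 0] : Fin 5 → ℝ) ⬝ᵥ
              (((1 : ℝ) / 4) • Matrix.diagonal ![(2 : ℝ), 0, 2, 1, 1]).mulVec
                ![0, 0, 1 / Real.sqrt 2, 1 / Real.sqrt 2, 0]))
          ((![1 / Real.sqrt 2, 1 / Real.sqrt 2, 0, 0, 0] : Fin 5 → ℝ) ⬝ᵥ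
              (((1 : ℝ) / 4) • Matrix.diagonal ![(0 : ℝ), 2, 2, 1, 1]).mulVec
                ![1 / Real.sqrt 2, 1 / Real.sqrt 2, 0, 0, 0]
            + (![0, 0, 1 / Real.sqrt 2, 1 / Real.sqrt 2, 0] : Fin 5 → ℝ) ⬝ᵥ
              (((1 : ℝ) / 4) • Matrix.diagonal ![(0 : ℝ), 2, 2, 1, 1]).mulVec
                ![0, 0, 1 / Real.sqrt 2, 1 / Real.sqrt 2, 0])
        = 5 / 8
    ∧ (∀ w : Fin 5 → ℝ, w ⬝ᵥ w = 1 →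
        (![1 / Real.sqrt 3, 1 / Real.sqrt 3, 1 / Real.sqrt 3, 0, 0] : Fin 5 → ℝ) ⬝ᵥ w = 0 →
        min (min
            ((![1 / Real.sqrt 3, 1 / Real.sqrt 3, 1 / Real.sqrt 3, 0, 0] : Fin 5 → ℝ) ⬝ᵥ
                (((1 : ℝ) / 4) • Matrix.diagonal ![(2 : ℝ), 2, 0, 1, 1]).mulVec
                  ![1 / Real.sqrt 3, 1 / Real.sqrt 3, 1 / Real.sqrt 3, 0, 0]
              + w ⬝ᵥ (((1 : ℝ) / 4) • Matrix.diagonal ![(2 : ℝ), 2, 0, 1, 1]).mulVec w)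
            ((![1 / Real.sqrt 3, 1 / Real.sqrt 3, 1 / Real.sqrt 3, 0, 0] : Fin 5 → ℝ) ⬝ᵥ
                (((1 : ℝ) / 4) • Matrix.diagonal ![(2 : ℝ), 0, 2, 1, 1]).mulVec
                  ![1 / Real.sqrt 3, 1 / Real.sqrt 3, 1 / Real.sqrt 3, 0, 0]
              + w ⬝ᵥ (((1 : ℝ) / 4) • Matrix.diagonal ![(2 : ℝ), 0, 2, 1, 1]).mulVec w))
            ((![1 / Real.sqrt 3, 1 / Real.sqrt 3, 1 / Real.sqrt 3, 0, 0] : Fin 5 → ℝ) ⬝ᵥ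
                (((1 : ℝ) / 4) • Matrix.diagonal ![(0 : ℝ), 2, 2, 1, 1]).mulVec
                  ![1 / Real.sqrt 3, 1 / Real.sqrt 3, 1 / Real.sqrt 3, 0, 0]
              + w ⬝ᵥ (((1 : ℝ) / 4) • Matrix.diagonal ![(0 : ℝ), 2, 2, 1, 1]).mulVec w)
          ≤ 7 / 12)
    ∧ (7 / 12 : ℝ) < 5 / 8 := by

  have hI2 : (Real.sqrt 2)⁻¹ * (Real.sqrt 2)⁻¹ = 1/2 := by
    rw [← mul_inv, Real.mul_self_sqrt (by norm_num : (0:ℝ) ≤ 2)]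
    norm_num
  have hI3 : (Real.sqrt 3)⁻¹ * (Real.sqrt 3)⁻¹ = 1/3 := by
    rw [← mul_inv, Real.mul_self_sqrt (by norm_num : (0:ℝ) ≤ 3)]
    norm_num
  have h3p : Real.sqrt 3 > 0 := Real.sqrt_pos.2 (by norm_num)
  refine ⟨?_, ?_, ?_, ?_, ?_, by norm_num⟩
  · simp [dotProduct, Fin.sum_univ_five]
    linear_combination 2 * hI2
  · simp [dotProduct, Fin.sum_univ_five]
    linear_combination 2 * hI2
  · simp [dotProduct, Fin.sum_univ_five]
  · simp [dotProduct, Matrix.mulVec, Fin.sum_univ_five, Matrix.diagonal]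
    rw [show (Real.sqrt 2)⁻¹ * (4⁻¹ * 2 * (Real.sqrt 2)⁻¹) = (1/4 : ℝ) from by
          linear_combination (1/2) * hI2,
        show (Real.sqrt 2)⁻¹ * (4⁻¹ * (Real.sqrt 2)⁻¹) = (1/8 : ℝ) from by
          linear_combination (1/4) * hI2]
    norm_num
  · intro w hw ho
    simp [dotProduct, Matrix.mulVec, Fin.sum_univ_five, Matrix.diagonal] at hw ho ⊢
    have hsum : w 0 + w 1 + w 2 = 0 := by
      field_simp at ho; linarith
    have hA : (Real.sqrt 3)⁻¹ * (4⁻¹ * 2 * (Real.sqrt 3)⁻¹) = 1/6 := by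
      rw [show (Real.sqrt 3)⁻¹ * (4⁻¹ * 2 * (Real.sqrt 3)⁻¹)
          = (4⁻¹ * 2) * ((Real.sqrt 3)⁻¹ * (Real.sqrt 3)⁻¹) from by ring, hI3]
      norm_num
    rw [hA]
    rcases le_or_gt 0 (w 0 * w 1) with h01 | h01
    · left; left
      have h2sq : w 2 * w 2 = (w 0 + w 1) * (w 0 + w 1) := by
        have h : w 2 = -(w 0 + w 1) := by linarith
        rw [h]; ring
      nlinarith [hw, h01, h2sq]
    rcases le_or_gt 0 (w 0 * w 2) with h02 | h02
    · left; right
      have h1sq : w 1 * w 1 = (w 0 + w 2) * (w 0 + w 2) := by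
        have h : w 1 = -(w 0 + w 2) := by linarith
        rw [h]; ring
      nlinarith [hw, h02, h1sq]
    · right
      have hpos : 0 < (w 0 * w 1) * (w 0 * w 2) := mul_pos_of_neg_of_neg h01 h02
      have h0 : w 0 ≠ 0 := by
        intro h; rw [h] at h01; simp at h01
      have h0sq : 0 < w 0 ^ 2 := by positivity
      have hyz : 0 < w 1 * w 2 := by nlinarith [hpos, h0sq]
      have h0sq' : w 0 * w 0 = (w 1 + w 2) * (w 1 + w 2) := by
        have h : w 0 = -(w 1 + w 2) := by linarith
        rw [h]; ring
      nlinarith [hw, hyz, h0sq']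
end

section
/- Let X ∈ ℝ^{n×p} with Xᵀ X = I_p and rows satisfying ‖x^{(i)}‖₂ ≤ μ√(p/n) for all i. Let y ∈ ℝⁿ, let β* = Xᵀ y be the full-data OLS estimator, and for S ⊆ {1,...,n} with s := |S| let β_{−S} be the OLS estimator computed after removing the rows indexed by S. Fix ε ∈ (0,1). If s ≤ nε / (pμ²(2ε+1)), then ‖y − Xβ_{−S}‖₂² ≤ (1+ε)‖y − Xβ*‖₂². -/
open Matrix

set_option maxHeartbeats 2000000 in
/-- Stability of OLS under subset removal: if `XᵀX = I`, the rows of `X` are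
`μ`-incoherent, and `s ≤ nε/(pμ²(2ε+1))`, then any OLS estimator computed after
removing the rows indexed by `S` increases the full-data squared error by at most
a factor `1 + ε`. -/
theorem stmt17 {n p : ℕ} (X : Matrix (Fin n) (Fin p) ℝ) (hX : Xᵀ * X = 1)
    (μ : ℝ) (hμ : 1 ≤ μ)
    (hinc : ∀ i, Real.sqrt (∑ j, X i j ^ 2) ≤ μ * Real.sqrt ((p : ℝ) / n))
    (y : Fin n → ℝ) (S : Finset (Fin n)) (s : ℕ) (hs : S.card = s)
    (ε : ℝ) (hε : ε ∈ Set.Ioo (0 : ℝ) 1)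
    (hsize : (s : ℝ) ≤ (n : ℝ) * ε / ((p : ℝ) * μ ^ 2 * (2 * ε + 1)))
    (βm : Fin p → ℝ)
    (hβm : ∀ b : Fin p → ℝ,
      ∑ i ∈ Sᶜ, (y i - X.mulVec βm i) ^ 2 ≤ ∑ i ∈ Sᶜ, (y i - X.mulVec b i) ^ 2) :
    ∑ i, (y i - X.mulVec βm i) ^ 2
      ≤ (1 + ε) * ∑ i, (y i - X.mulVec (Xᵀ.mulVec y) i) ^ 2 := by
  obtain ⟨hε0, hε1⟩ := hε
  by_cases hp : p = 0
  · subst hp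
    have h1 : X.mulVec βm = X.mulVec (Xᵀ.mulVec y) := by
      exact congrArg _ (Subsingleton.elim _ _)
    rw [h1]
    have h2 : (0:ℝ) ≤ ∑ i, (y i - X.mulVec (Xᵀ.mulVec y) i) ^ 2 :=
      Finset.sum_nonneg fun i _ => sq_nonneg _
    nlinarith
  have hp' : 0 < p := Nat.pos_of_ne_zero hp
  have hn : 0 < n := by
    rcases Nat.eq_zero_or_pos n with h | h
    · exfalso
      subst h
      have := congrFun (congrFun hX ⟨0, hp'⟩) ⟨0, hp'⟩
      simp [Matrix.mul_apply, Matrix.one_apply] at this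
    · exact h
  have hn' : (0:ℝ) < n := Nat.cast_pos.mpr hn
  have hpR : (0:ℝ) < p := Nat.cast_pos.mpr hp'
  have hμ0 : (0:ℝ) < μ := lt_of_lt_of_le one_pos hμ
  -- basic matrix facts
  have hXtX : ∀ v : Fin p → ℝ, Xᵀ.mulVec (X.mulVec v) = v := by
    intro v
    rw [Matrix.mulVec_mulVec, hX, Matrix.one_mulVec]
  set β : Fin p → ℝ := Xᵀ.mulVec y with hβdef
  set r : Fin n → ℝ := y - X.mulVec β with hrdef
  have hXtr : Xᵀ.mulVec r = 0 := by
    rw [hrdef, Matrix.mulVec_sub, hXtX]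
    simp [hβdef]
  have hortho : ∀ v : Fin p → ℝ, ∑ i, r i * X.mulVec v i = 0 := by
    intro v
    have h1 : ∑ i, r i * X.mulVec v i = r ⬝ᵥ X.mulVec v := rfl
    rw [h1, Matrix.dotProduct_mulVec, ← Matrix.mulVec_transpose, hXtr]
    simp [dotProduct]
  have hnorm : ∀ v : Fin p → ℝ, ∑ i, (X.mulVec v i) ^ 2 = ∑ j, v j ^ 2 := by
    intro v
    have h1 : ∑ i, (X.mulVec v i) ^ 2 = X.mulVec v ⬝ᵥ X.mulVec v := by
      simp [dotProduct, sq]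
    rw [h1, Matrix.dotProduct_mulVec, ← Matrix.mulVec_transpose, hXtX]
    simp [dotProduct, sq]
  set δ : Fin p → ℝ := β - βm with hδdef
  set R : ℝ := ∑ i, r i ^ 2 with hRdef
  set D : ℝ := ∑ j, δ j ^ 2 with hDdef
  set A0 : ℝ := ∑ i ∈ S, (X.mulVec δ i) ^ 2 with hA0def
  set L : ℝ := ∑ i ∈ S, r i * X.mulVec δ i with hLdef
  set Lc : ℝ := ∑ i ∈ Sᶜ, r i * X.mulVec δ i with hLcdef
  set Qc : ℝ := ∑ i ∈ Sᶜ, (X.mulVec δ i) ^ 2 with hQcdef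
  have hR0 : 0 ≤ R := Finset.sum_nonneg fun i _ => sq_nonneg _
  have hD0 : 0 ≤ D := Finset.sum_nonneg fun j _ => sq_nonneg _
  have hA00 : 0 ≤ A0 := Finset.sum_nonneg fun i _ => sq_nonneg _
  have hQc0 : 0 ≤ Qc := Finset.sum_nonneg fun i _ => sq_nonneg _
  have hLc : L + Lc = 0 := by
    have h1 := hortho δ
    rw [← Finset.sum_add_sum_compl S] at h1
    rw [hLdef, hLcdef]
    linarith
  have hQcD : A0 + Qc = D := by
    have h1 := hnorm δ
    rw [← Finset.sum_add_sum_compl S] at h1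
    rw [hA0def, hQcdef, hDdef, h1]
  -- decomposition of the full sum
  have hdecomp : ∀ b : Fin p → ℝ,
      ∑ i, (y i - X.mulVec b i) ^ 2 = R + ∑ j, (β j - b j) ^ 2 := by
    intro b
    have hpt : ∀ i, y i - X.mulVec b i = r i + X.mulVec (β - b) i := by
      intro i
      simp only [hrdef, Pi.sub_apply, Matrix.mulVec_sub]
      ring
    calc ∑ i, (y i - X.mulVec b i) ^ 2
        = ∑ i, (r i ^ 2 + (2 * (r i * X.mulVec (β - b) i) + (X.mulVec (β - b) i) ^ 2)) := by
          refine Finset.sum_congr rfl fun i _ => ?_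
          rw [hpt i]; ring
      _ = R + (2 * ∑ i, r i * X.mulVec (β - b) i + ∑ i, (X.mulVec (β - b) i) ^ 2) := by
          rw [Finset.sum_add_distrib, Finset.sum_add_distrib, ← Finset.mul_sum, hRdef]
      _ = R + ∑ j, (β j - b j) ^ 2 := by
          rw [hortho (β - b), hnorm (β - b)]
          simp
  -- quadratic expansion over Sᶜ along the segment β - u • δ
  have hf : ∀ u : ℝ, ∑ i ∈ Sᶜ, (y i - X.mulVec (β - u • δ) i) ^ 2
      = (∑ i ∈ Sᶜ, r i ^ 2) + (2 * u * Lc + u ^ 2 * Qc) := by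
    intro u
    have hpt : ∀ i, y i - X.mulVec (β - u • δ) i = r i + u * X.mulVec δ i := by
      intro i
      simp only [hrdef, Pi.sub_apply, Matrix.mulVec_sub, Matrix.mulVec_smul,
        Pi.smul_apply, smul_eq_mul]
      ring
    calc ∑ i ∈ Sᶜ, (y i - X.mulVec (β - u • δ) i) ^ 2
        = ∑ i ∈ Sᶜ, (r i ^ 2 + (2 * u * (r i * X.mulVec δ i) + u ^ 2 * (X.mulVec δ i) ^ 2)) := by
          refine Finset.sum_congr rfl fun i _ => ?_
          rw [hpt i]; ring
      _ = (∑ i ∈ Sᶜ, r i ^ 2) + (2 * u * Lc + u ^ 2 * Qc) := by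
          rw [Finset.sum_add_distrib, Finset.sum_add_distrib, ← Finset.mul_sum,
            ← Finset.mul_sum, hLcdef, hQcdef]
  have hβm1 : βm = β - (1 : ℝ) • δ := by
    funext j
    simp [hδdef]
  have key : ∀ u : ℝ, 2 * Lc + Qc ≤ 2 * u * Lc + u ^ 2 * Qc := by
    intro u
    have hb := hβm (β - u • δ)
    rw [show (fun i => (y i - X.mulVec βm i) ^ 2) = fun i => (y i - X.mulVec (β - (1:ℝ) • δ) i) ^ 2
      from by rw [← hβm1]] at hb
    rw [hf u, hf 1] at hb
    nlinarith [hb]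
  have hpoly : ∀ t : ℝ, 0 ≤ 2 * t * (Lc + Qc) + t ^ 2 * Qc := by
    intro t
    have h1 := key (1 + t)
    nlinarith [h1]
  have hc : Lc + Qc = 0 := by
    have h1 : (0:ℝ) < Qc + 1 := by linarith
    have ht := hpoly (-(Lc + Qc) / (Qc + 1))
    have h2 : 2 * (-(Lc + Qc) / (Qc + 1)) * (Lc + Qc) + (-(Lc + Qc) / (Qc + 1)) ^ 2 * Qc
        = (Lc + Qc) ^ 2 * (-Qc - 2) / (Qc + 1) ^ 2 := by
      field_simp
      ring
    rw [h2] at ht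
    have h3 : 0 ≤ (Lc + Qc) ^ 2 * (-Qc - 2) := by
      have h4 := mul_le_mul_of_nonneg_right ht (le_of_lt (pow_pos h1 2))
      rw [zero_mul, div_mul_cancel₀ _ (ne_of_gt (pow_pos h1 2))] at h4
      exact h4
    have h5 : (Lc + Qc) ^ 2 = 0 := le_antisymm (by nlinarith) (sq_nonneg _)
    exact pow_eq_zero_iff two_ne_zero |>.mp h5
  have hid : D = L + A0 := by linarith
  -- incoherence bounds
  have hrow : ∀ i, ∑ j, X i j ^ 2 ≤ μ ^ 2 * ((p : ℝ) / n) := by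
    intro i
    have h2 : (0:ℝ) ≤ ∑ j, X i j ^ 2 := Finset.sum_nonneg fun j _ => sq_nonneg _
    have h3 : (0:ℝ) ≤ (p : ℝ) / n := by positivity
    calc ∑ j, X i j ^ 2 = (Real.sqrt (∑ j, X i j ^ 2)) ^ 2 := (Real.sq_sqrt h2).symm
      _ ≤ (μ * Real.sqrt ((p : ℝ) / n)) ^ 2 :=
          pow_le_pow_left₀ (Real.sqrt_nonneg _) (hinc i) 2
      _ = μ ^ 2 * ((p : ℝ) / n) := by rw [mul_pow, Real.sq_sqrt h3]
  have hA0b : A0 ≤ (s : ℝ) * ((μ ^ 2 * ((p : ℝ) / n)) * D) := by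
    have h1 : ∀ i ∈ S, (X.mulVec δ i) ^ 2 ≤ (μ ^ 2 * ((p : ℝ) / n)) * D := by
      intro i _
      have h2 : (X.mulVec δ i) ^ 2 ≤ (∑ j, X i j ^ 2) * D := by
        have h3 := Finset.sum_mul_sq_le_sq_mul_sq Finset.univ (fun j => X i j) δ
        have h4 : X.mulVec δ i = ∑ j, X i j * δ j := by
          simp [Matrix.mulVec, dotProduct]
        rw [h4, hDdef]
        exact h3
      exact h2.trans (mul_le_mul_of_nonneg_right (hrow i) hD0)
    calc A0 ≤ ∑ i ∈ S, (μ ^ 2 * ((p : ℝ) / n)) * D := Finset.sum_le_sum h1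
      _ = (s : ℝ) * ((μ ^ 2 * ((p : ℝ) / n)) * D) := by
          rw [Finset.sum_const, hs, nsmul_eq_mul]
  have hL2 : L ^ 2 ≤ R * A0 := by
    have h1 := Finset.sum_mul_sq_le_sq_mul_sq S r (X.mulVec δ)
    have h2 : ∑ i ∈ S, r i ^ 2 ≤ R := by
      rw [hRdef]
      exact Finset.sum_le_sum_of_subset_of_nonneg (Finset.subset_univ S)
        (fun i _ _ => sq_nonneg _)
    calc L ^ 2 ≤ (∑ i ∈ S, r i ^ 2) * A0 := h1
      _ ≤ R * A0 := mul_le_mul_of_nonneg_right h2 hA00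
  -- the size condition
  have hαε : (s : ℝ) * (μ ^ 2 * ((p : ℝ) / n)) * (2 * ε + 1) ≤ ε := by
    have hP : (0:ℝ) < (p : ℝ) * μ ^ 2 * (2 * ε + 1) := by positivity
    have h1 : (s : ℝ) * ((p : ℝ) * μ ^ 2 * (2 * ε + 1)) ≤ (n : ℝ) * ε := by
      rw [← le_div_iff₀ hP]
      exact hsize
    have h2 : (s : ℝ) * (μ ^ 2 * ((p : ℝ) / n)) * (2 * ε + 1)
        = (s : ℝ) * ((p : ℝ) * μ ^ 2 * (2 * ε + 1)) / n := by
      field_simp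
    rw [h2, div_le_iff₀ hn']
    linarith
  -- finish
  set α : ℝ := (s : ℝ) * (μ ^ 2 * ((p : ℝ) / n)) with hαdef
  have hα0 : 0 ≤ α := by
    rw [hαdef]
    exact mul_nonneg (Nat.cast_nonneg s) (mul_nonneg (sq_nonneg μ)
      (div_nonneg (Nat.cast_nonneg p) (Nat.cast_nonneg n)))
  have hA0α : A0 ≤ α * D := by
    rw [hαdef, mul_assoc]
    exact hA0b
  have hL2' : (D - A0) ^ 2 ≤ R * A0 := by
    have hL : L = D - A0 := by linarith
    rw [← hL]
    exact hL2
  have step1 : D ^ 2 ≤ 2 * α * D ^ 2 + α * R * D := by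
    nlinarith [hL2', mul_le_mul_of_nonneg_left hA0α hR0,
      mul_le_mul_of_nonneg_left hA0α hD0, sq_nonneg A0]
  have step2 : D ^ 2 ≤ ε * R * D := by
    nlinarith [mul_le_mul_of_nonneg_left step1 (by linarith : (0:ℝ) ≤ 2 * ε + 1),
      mul_le_mul_of_nonneg_right hαε (sq_nonneg D),
      mul_le_mul_of_nonneg_right hαε (mul_nonneg hR0 hD0)]
  have hDεR : D ≤ ε * R := by
    rcases eq_or_lt_of_le hD0 with h | h
    · rw [← h]
      positivity
    · nlinarith [step2, h]
  have hgoal1 : ∑ i, (y i - X.mulVec βm i) ^ 2 = R + D := by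
    rw [hdecomp βm, hDdef]
    simp [hδdef]
  have hgoal2 : ∑ i, (y i - X.mulVec β i) ^ 2 = R := by
    rw [hdecomp β]
    simp
  rw [hgoal1, hgoal2]
  nlinarith [hDεR, hR0]
end
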